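/- Let c > 0 and μ be the measure e^{-cy}dy on ℝ_+. If f ∈ W^{1,2}(μ) ∩ L^5(μ), then the function y ↦ f(y)·e^{-cy/2} belongs to W^{1,2}(ℝ_+, dy), and hence (by Morrey embedding) has a 1/2-Hölder continuous representative; in particular f has a continuous representative on [0,∞). -/

import Mathlib

open MeasureTheory Set

/-- Cauchy–Schwarz bound: the integral of `|D|` over `Ioc x y ⊆ Ioi 0` is bounded by
`√(∫_{Ioi 0} D²) · √(y - x)`. -/
lemma aux_cs {D : ℝ → ℝ} (hmeas : AEStronglyMeasurable D (volume.restrict (Set.Ioi 0)))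
    (hsq : IntegrableOn (fun y => D y ^ 2) (Set.Ioi 0))
    {x y : ℝ} (hx : 0 ≤ x) (hxy : x ≤ y) :
    ∫ t in Set.Ioc x y, |D t| ≤
      Real.sqrt (∫ t in Set.Ioi 0, D t ^ 2) * Real.sqrt (y - x) := by
  have hsub : Set.Ioc x y ⊆ Set.Ioi 0 := fun t ht => lt_of_le_of_lt hx ht.1
  have hle : volume.restrict (Set.Ioc x y) ≤ volume.restrict (Set.Ioi 0) :=
    Measure.restrict_mono hsub le_rfl
  haveI : IsFiniteMeasure (volume.restrict (Set.Ioc x y)) :=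
    ⟨by rw [Measure.restrict_apply_univ]; exact measure_Ioc_lt_top⟩
  have hD2loc : MemLp D 2 (volume.restrict (Set.Ioc x y)) := by
    refine (memLp_two_iff_integrable_sq (hmeas.mono_measure hle)).mpr ?_
    exact (hsq.mono_set hsub)
  have hpq : Real.HolderConjugate 2 2 := Real.HolderConjugate.two_two
  have h1 : MemLp (fun t => |D t|) (ENNReal.ofReal 2) (volume.restrict (Set.Ioc x y)) := by
    have := hD2loc.norm
    simpa [Real.norm_eq_abs, ENNReal.ofReal_ofNat] using this
  have h2 : MemLp (fun _ : ℝ => (1 : ℝ)) (ENNReal.ofReal 2) (volume.restrict (Set.Ioc x y)) :=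
    memLp_const 1
  have hCS := integral_mul_le_Lp_mul_Lq_of_nonneg hpq
    (Filter.Eventually.of_forall fun t => abs_nonneg (D t))
    (Filter.Eventually.of_forall fun _ => zero_le_one) h1 h2
  have habs : ∀ t, |D t| ^ (2 : ℝ) = D t ^ 2 := by
    intro t
    rw [show (2 : ℝ) = ((2 : ℕ) : ℝ) by norm_num, Real.rpow_natCast, sq_abs]
  have hone : ∫ t in Set.Ioc x y, (1 : ℝ) ^ (2 : ℝ) = y - x := by
    simp [Real.volume_Ioc, ENNReal.toReal_ofReal (sub_nonneg.mpr hxy), hxy]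
  have hmono : ∫ t in Set.Ioc x y, D t ^ 2 ≤ ∫ t in Set.Ioi 0, D t ^ 2 := by
    refine setIntegral_mono_set hsq ?_ (Filter.Eventually.of_forall hsub)
    exact Filter.Eventually.of_forall fun t => sq_nonneg _
  have e1 : ∫ t in Set.Ioc x y, |D t| ^ (2:ℝ) = ∫ t in Set.Ioc x y, D t ^ 2 :=
    integral_congr_ae (Filter.Eventually.of_forall fun t => habs t)
  have h3 : (0:ℝ) ≤ ∫ t in Set.Ioc x y, D t ^ 2 :=
    setIntegral_nonneg measurableSet_Ioc fun t _ => sq_nonneg _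
  calc ∫ t in Set.Ioc x y, |D t| = ∫ t in Set.Ioc x y, |D t| * 1 := by simp
    _ ≤ (∫ t in Set.Ioc x y, |D t| ^ (2:ℝ)) ^ (1/(2:ℝ)) *
        (∫ t in Set.Ioc x y, (1:ℝ) ^ (2:ℝ)) ^ (1/(2:ℝ)) := hCS
    _ = (∫ t in Set.Ioc x y, D t ^ 2) ^ (1/(2:ℝ)) * (y - x) ^ (1/(2:ℝ)) := by
        rw [e1, hone]
    _ ≤ (∫ t in Set.Ioi 0, D t ^ 2) ^ (1/(2:ℝ)) * (y - x) ^ (1/(2:ℝ)) :=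
        mul_le_mul_of_nonneg_right (Real.rpow_le_rpow h3 hmono (by norm_num))
          (Real.rpow_nonneg (sub_nonneg.mpr hxy) _)
    _ = Real.sqrt (∫ t in Set.Ioi 0, D t ^ 2) * Real.sqrt (y - x) := by
        rw [Real.sqrt_eq_rpow, Real.sqrt_eq_rpow]

theorem stmt7 (c : ℝ) (hc : 0 < c) (f : ℝ → ℝ)
    (hfd : DifferentiableOn ℝ f (Set.Ioi 0))
    (hW : Integrable
      (fun y => Real.exp (-c * y) * ((f y) ^ 2 + (derivWithin f (Set.Ioi 0) y) ^ 2))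
      (volume.restrict (Set.Ioi 0)))
    (hL5 : Integrable (fun y => Real.exp (-c * y) * |f y| ^ 5)
      (volume.restrict (Set.Ioi 0))) :
    (MemLp (fun y => f y * Real.exp (-c * y / 2)) 2 (volume.restrict (Set.Ioi 0)) ∧
      MemLp (fun y => derivWithin (fun z => f z * Real.exp (-c * z / 2)) (Set.Ioi 0) y) 2
        (volume.restrict (Set.Ioi 0))) ∧
    (∃ C : NNReal, ∃ g : ℝ → ℝ, HolderOnWith C (1 / 2 : NNReal) g (Set.Ici 0) ∧
      ∀ᵐ y ∂(volume.restrict (Set.Ioi 0)), f y * Real.exp (-c * y / 2) = g y) ∧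
    (∃ ftilde : ℝ → ℝ, ContinuousOn ftilde (Set.Ici 0) ∧
      ∀ᵐ y ∂(volume.restrict (Set.Ioi 0)), f y = ftilde y) := by
  set F : ℝ → ℝ := fun y => f y * Real.exp (-c * y / 2) with hFdef
  set D : ℝ → ℝ := fun y => (deriv f y - c / 2 * f y) * Real.exp (-c * y / 2) with hDdef
  -- exponential squared
  have hexp2 : ∀ y : ℝ, Real.exp (-c * y / 2) ^ 2 = Real.exp (-c * y) := by
    intro y; rw [sq, ← Real.exp_add]; ring_nf
  -- derivative of F on Ioi 0
  have hFD : ∀ y : ℝ, 0 < y → HasDerivAt F (D y) y := by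
    intro y hy
    have hf' : HasDerivAt f (deriv f y) y :=
      (hfd.differentiableAt (Ioi_mem_nhds hy)).hasDerivAt
    have hlin : HasDerivAt (fun z : ℝ => -c * z / 2) (-c / 2) y := by
      simpa using ((hasDerivAt_id y).const_mul (-c)).div_const 2
    have hexp : HasDerivAt (fun z : ℝ => Real.exp (-c * z / 2))
        (Real.exp (-c * y / 2) * (-c / 2)) y := hlin.exp
    have : HasDerivAt (fun z => f z * Real.exp (-c * z / 2)) _ y := hf'.mul hexp
    convert this using 1
    show (deriv f y - c / 2 * f y) * Real.exp (-c * y / 2) = _; ring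
  -- f continuous ⇒ measurable things
  have hf_meas : AEStronglyMeasurable f (volume.restrict (Set.Ioi 0)) :=
    (hfd.continuousOn).aestronglyMeasurable measurableSet_Ioi
  have hcexp : Continuous fun y : ℝ => Real.exp (-c * y / 2) :=
    Real.continuous_exp.comp ((continuous_const.mul continuous_id).div_const 2)
  have hF_meas : AEStronglyMeasurable F (volume.restrict (Set.Ioi 0)) :=
    hf_meas.mul hcexp.aestronglyMeasurable
  have hderiv_meas : AEStronglyMeasurable (deriv f) (volume.restrict (Set.Ioi 0)) :=
    (measurable_deriv f).aestronglyMeasurable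
  have hD_meas : AEStronglyMeasurable D (volume.restrict (Set.Ioi 0)) :=
    (hderiv_meas.sub (hf_meas.const_mul (c / 2))).mul hcexp.aestronglyMeasurable
  -- integrability of F² and D²
  have hFsq : IntegrableOn (fun y => F y ^ 2) (Set.Ioi 0) := by
    refine Integrable.mono' hW (hF_meas.pow 2) ?_
    filter_upwards [ae_restrict_mem measurableSet_Ioi] with y _
    have h1 : F y ^ 2 = f y ^ 2 * Real.exp (-c * y) := by
      simp only [hFdef]; rw [mul_pow, hexp2]
    rw [Real.norm_eq_abs, abs_of_nonneg (sq_nonneg _), h1]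
    nlinarith [Real.exp_pos (-c * y), sq_nonneg (derivWithin f (Set.Ioi 0) y),
      mul_nonneg (Real.exp_pos (-c * y)).le (sq_nonneg (derivWithin f (Set.Ioi 0) y))]
  have hDsq : IntegrableOn (fun y => D y ^ 2) (Set.Ioi 0) := by
    refine Integrable.mono' (hW.const_mul (2 + c ^ 2 / 2)) (hD_meas.pow 2) ?_
    filter_upwards [ae_restrict_mem measurableSet_Ioi] with y hy
    have hdw : derivWithin f (Set.Ioi 0) y = deriv f y :=
      derivWithin_of_isOpen isOpen_Ioi hy
    have h1 : D y ^ 2 = (deriv f y - c / 2 * f y) ^ 2 * Real.exp (-c * y) := by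
      simp only [hDdef]; rw [mul_pow, hexp2]
    rw [Real.norm_eq_abs, abs_of_nonneg (sq_nonneg _), h1, hdw]
    have hkey : (deriv f y - c / 2 * f y) ^ 2 ≤
        (2 + c ^ 2 / 2) * (f y ^ 2 + deriv f y ^ 2) := by
      nlinarith [sq_nonneg (deriv f y + c / 2 * f y), sq_nonneg (f y), sq_nonneg (deriv f y),
        sq_nonneg (c * deriv f y), sq_nonneg (c * f y)]
    have hep := (Real.exp_pos (-c * y)).le
    calc (deriv f y - c / 2 * f y) ^ 2 * Real.exp (-c * y)
        ≤ ((2 + c ^ 2 / 2) * (f y ^ 2 + deriv f y ^ 2)) * Real.exp (-c * y) := by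
          exact mul_le_mul_of_nonneg_right hkey hep
      _ = (2 + c ^ 2 / 2) * (Real.exp (-c * y) * (f y ^ 2 + deriv f y ^ 2)) := by ring
  -- MemLp statements
  have hF2 : MemLp F 2 (volume.restrict (Set.Ioi 0)) :=
    (memLp_two_iff_integrable_sq hF_meas).mpr hFsq
  have hD2 : MemLp D 2 (volume.restrict (Set.Ioi 0)) :=
    (memLp_two_iff_integrable_sq hD_meas).mpr hDsq
  have hDWF : ∀ y ∈ Set.Ioi (0:ℝ), derivWithin F (Set.Ioi 0) y = D y := by
    intro y hy
    rw [derivWithin_of_isOpen isOpen_Ioi hy]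
    exact (hFD y hy).deriv
  have hD2' : MemLp (fun y => derivWithin F (Set.Ioi 0) y) 2 (volume.restrict (Set.Ioi 0)) := by
    refine hD2.ae_eq ?_
    exact (ae_restrict_iff' measurableSet_Ioi).mpr (Filter.Eventually.of_forall
      fun y hy => (hDWF y hy).symm)
  -- interval integrability of D
  have hIntD : ∀ a b : ℝ, 0 ≤ a → a ≤ b → IntegrableOn D (Set.Ioc a b) := by
    intro a b ha hab
    have hsub : Set.Ioc a b ⊆ Set.Ioi 0 := fun t ht => lt_of_le_of_lt ha ht.1
    have hle : volume.restrict (Set.Ioc a b) ≤ volume.restrict (Set.Ioi 0) :=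
      Measure.restrict_mono hsub le_rfl
    haveI : IsFiniteMeasure (volume.restrict (Set.Ioc a b)) :=
      ⟨by rw [Measure.restrict_apply_univ]; exact measure_Ioc_lt_top⟩
    exact (hD2.mono_measure hle).integrable one_le_two
  have hII : ∀ a b : ℝ, 0 ≤ a → 0 ≤ b → IntervalIntegrable D volume a b := by
    intro a b ha hb
    rcases le_total a b with h | h
    · exact (intervalIntegrable_iff_integrableOn_Ioc_of_le h).mpr (hIntD a b ha h)
    · exact ((intervalIntegrable_iff_integrableOn_Ioc_of_le h).mpr (hIntD b a hb h)).symm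
  -- FTC
  have key : ∀ a b : ℝ, 0 < a → a ≤ b → ∫ t in a..b, D t = F b - F a := by
    intro a b ha hab
    refine intervalIntegral.integral_eq_sub_of_hasDerivAt (fun t ht => ?_)
      ((intervalIntegrable_iff_integrableOn_Ioc_of_le hab).mpr (hIntD a b ha.le hab))
    rw [Set.uIcc_of_le hab] at ht
    exact hFD t (lt_of_lt_of_le ha ht.1)
  -- the representative
  set g : ℝ → ℝ := fun y => F 1 + ∫ t in (1:ℝ)..y, D t with hgdef
  have hgF : ∀ y : ℝ, 0 < y → g y = F y := by
    intro y hy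
    rcases le_total 1 y with h | h
    · simp only [hgdef]; rw [key 1 y one_pos h]; ring
    · simp only [hgdef]
      rw [intervalIntegral.integral_symm, key y 1 hy h]; ring
  have hgsub : ∀ x y : ℝ, 0 ≤ x → 0 ≤ y → g y - g x = ∫ t in x..y, D t := by
    intro x y hx hy
    simp only [hgdef]
    rw [add_sub_add_left_eq_sub, ← intervalIntegral.integral_interval_sub_left
      (hII 1 y (by norm_num) hy) (hII 1 x (by norm_num) hx)]
  set M : ℝ := ∫ t in Set.Ioi (0:ℝ), D t ^ 2 with hMdef
  have hM0 : 0 ≤ M := setIntegral_nonneg measurableSet_Ioi fun t _ => sq_nonneg _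
  -- real Hölder bound
  have hbound : ∀ x y : ℝ, 0 ≤ x → x ≤ y →
      |g y - g x| ≤ Real.sqrt M * Real.sqrt (y - x) := by
    intro x y hx hxy
    rw [hgsub x y hx (le_trans hx hxy)]
    have h1 : |∫ t in x..y, D t| ≤ ∫ t in Set.Ioc x y, |D t| := by
      rw [intervalIntegral.intervalIntegral_eq_integral_uIoc, Set.uIoc_of_le hxy]
      simp only [if_pos hxy, one_smul]
      exact (norm_integral_le_integral_norm D).trans_eq (by simp [Real.norm_eq_abs])
    exact h1.trans (aux_cs hD_meas hDsq hx hxy)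
  -- Hölder continuity in the edist form
  set C : NNReal := Real.toNNReal (Real.sqrt M) with hCdef
  have hHolder : HolderOnWith C (1 / 2 : NNReal) g (Set.Ici 0) := by
    intro x hx y hy
    have hmain : ∀ a b : ℝ, 0 ≤ a → a ≤ b →
        edist (g a) (g b) ≤ (C : ENNReal) * edist a b ^ ((1 / 2 : NNReal) : ℝ) := by
      intro a b ha hab
      rw [edist_dist, Real.dist_eq, edist_dist, Real.dist_eq]
      have hab' : |a - b| = b - a := by rw [abs_sub_comm]; exact abs_of_nonneg (sub_nonneg.mpr hab)
      rw [hab']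
      have hNN : ((1 / 2 : NNReal) : ℝ) = (1/2 : ℝ) := by norm_num
      rw [hNN, ENNReal.ofReal_rpow_of_nonneg (sub_nonneg.mpr hab) (by norm_num : (0:ℝ) ≤ 1/2)]
      have hC : (C : ENNReal) = ENNReal.ofReal (Real.sqrt M) := by
        rw [hCdef]; rfl
      rw [hC, ← ENNReal.ofReal_mul (Real.sqrt_nonneg M)]
      apply ENNReal.ofReal_le_ofReal
      rw [← Real.sqrt_eq_rpow, abs_sub_comm]
      exact hbound a b ha hab
    rcases le_total x y with h | h
    · exact hmain x y hx h
    · rw [edist_comm, edist_comm x y]; exact hmain y x hy h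
  have hae_gF : ∀ᵐ y ∂(volume.restrict (Set.Ioi 0)), F y = g y :=
    (ae_restrict_iff' measurableSet_Ioi).mpr (Filter.Eventually.of_forall
      fun y hy => (hgF y hy).symm)
  -- continuous representative of f
  set ftilde : ℝ → ℝ := fun y => g y * Real.exp (c * y / 2) with hftdef
  have hft_cont : ContinuousOn ftilde (Set.Ici 0) := by
    refine ContinuousOn.mul (hHolder.continuousOn ?_) (Continuous.continuousOn ?_)
    · norm_num
    · exact Real.continuous_exp.comp ((continuous_const.mul continuous_id).div_const 2)
  have hae_f : ∀ᵐ y ∂(volume.restrict (Set.Ioi 0)), f y = ftilde y := by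
    refine (ae_restrict_iff' measurableSet_Ioi).mpr (Filter.Eventually.of_forall fun y hy => ?_)
    simp only [hftdef]
    rw [hgF y hy]
    simp only [hFdef]
    rw [mul_assoc, ← Real.exp_add]
    ring_nf
    simp
  exact ⟨⟨hF2, hD2'⟩, ⟨C, g, hHolder, hae_gF⟩, ⟨ftilde, hft_cont, hae_f⟩⟩
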